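/- Let X ⊆ ℕ² and n ≥ 1, and let D = G_n(X) be the digraph on [n] with edge (i,j) iff i ≠ j and (i,j) ∉ X, with complement D̄ (edges are the pairs (i,j), i ≠ j, not in D). Then d_X(∅;n) = Σ_{σ ∈ 𝔖_{[n]}(D, D̄)} (−1)^{φ(σ)}, where 𝔖_{[n]}(D, D̄) is the set of permutations σ of [n] each of whose cycles is a D-cycle or a D̄-cycle, and φ(σ) = Σ (|γ| − 1) over the nontrivial cycles γ of σ that are D̄-cycles. -/

import Mathlib

open Classical in
/-- The `X`-descent set of a word `w = w₁⋯w_n` (stored 0-indexed as a list), as a subset of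
`[n-1] = {1, …, n-1}`: position `i` is an `X`-descent iff `(w_i, w_{i+1}) ∈ X`. -/
noncomputable def XDes (X : Set (ℕ × ℕ)) (w : List ℕ) : Finset ℕ :=
  (Finset.Icc 1 (w.length - 1)).filter (fun i => (w.getD (i - 1) 0, w.getD i 0) ∈ X)

/-- `dX X I S` is the number of permutations of the finite label set `S ⊆ ℕ` (written in
one-line notation as duplicate-free lists using exactly the labels of `S`) whose
`X`-descent set is exactly `I`. -/
noncomputable def dX (X : Set (ℕ × ℕ)) (I : Finset ℕ) (S : Finset ℕ) : ℕ :=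
  Nat.card {w : List ℕ // w.Nodup ∧ w.toFinset = S ∧ XDes X w = I}

/-- `dXn X I n = dX X I [n]` where `[n] = {1, …, n}`. -/
noncomputable def dXn (X : Set (ℕ × ℕ)) (I : Finset ℕ) (n : ℕ) : ℕ :=
  dX X I (Finset.Icc 1 n)

/-- A (nontrivial) cycle `c` of a permutation of `Fin n` is a `D`-cycle for `D = G_n(X)`
(vertex `x : Fin n` ↔ label `x + 1 ∈ [n]`; arc `(i,j)` iff `i ≠ j` and `(i,j) ∉ X`) when all
the arcs `(x, c x)` along the cycle lie in `D`. -/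
def isGcycle (X : Set (ℕ × ℕ)) {n : ℕ} (c : Equiv.Perm (Fin n)) : Prop :=
  ∀ x ∈ c.support, ((x : ℕ) + 1) ≠ ((c x : ℕ) + 1) ∧ (((x : ℕ) + 1, (c x : ℕ) + 1) ∉ X)

/-- A cycle `c` is a `D̄`-cycle for the complement `D̄` of `D = G_n(X)` (arc `(i,j)` iff
`i ≠ j` and `(i,j) ∈ X`) when all the arcs `(x, c x)` along the cycle lie in `D̄`. -/
def isGbarCycle (X : Set (ℕ × ℕ)) {n : ℕ} (c : Equiv.Perm (Fin n)) : Prop :=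
  ∀ x ∈ c.support, ((x : ℕ) + 1) ≠ ((c x : ℕ) + 1) ∧ (((x : ℕ) + 1, (c x : ℕ) + 1) ∈ X)

namespace Stmt10

open Equiv Finset

variable {V : Type} [Fintype V] [DecidableEq V]

/-- transitivity of a permutation -/
def TransP {α : Type} (σ : Equiv.Perm α) : Prop := ∀ a b : α, ∃ k : ℕ, (σ ^ k) a = b

lemma pow_apply_succ {α : Type} (σ : Equiv.Perm α) (k : ℕ) (a : α) :
    (σ ^ (k+1)) a = σ ((σ ^ k) a) := by
  rw [pow_succ', Equiv.Perm.mul_apply]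

/-- delete the point `x` from a permutation (splicing it out of its cycle) -/
def delPerm (x : V) (σ : Equiv.Perm V) : Equiv.Perm {y : V // y ≠ x} :=
  (Equiv.swap x (σ x) * σ).subtypePerm (by
    have hx : (Equiv.swap x (σ x) * σ) x = x := by
      simp [Equiv.Perm.mul_apply]
    intro y
    constructor
    · intro hy hcon
      exact hy (by rw [hcon, hx])
    · intro hy hcon
      exact hy (by
        have : (Equiv.swap x (σ x) * σ) y = (Equiv.swap x (σ x) * σ) x := by rw [hcon, hx]
        exact (Equiv.swap x (σ x) * σ).injective this))

lemma delPerm_apply (x : V) (σ : Equiv.Perm V) (a : {y : V // y ≠ x}) :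
    (delPerm x σ a : V) = Equiv.swap x (σ x) (σ a) := rfl

/-- insert the point `x` into a permutation, in front of `v` -/
def insPerm (x v : V) (σ' : Equiv.Perm {y : V // y ≠ x}) : Equiv.Perm V :=
  Equiv.swap x v * Equiv.Perm.ofSubtype σ'

lemma insPerm_apply_self (x v : V) (σ' : Equiv.Perm {y : V // y ≠ x}) :
    insPerm x v σ' x = v := by
  have h1 : Equiv.Perm.ofSubtype σ' x = x :=
    Equiv.Perm.ofSubtype_apply_of_not_mem σ' (by simp)
  rw [insPerm, Equiv.Perm.mul_apply, h1, Equiv.swap_apply_left]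

lemma insPerm_apply_ne (x v : V) (σ' : Equiv.Perm {y : V // y ≠ x}) {y : V} (hy : y ≠ x) :
    insPerm x v σ' y = Equiv.swap x v ((σ' ⟨y, hy⟩ : V)) := by
  have h1 : Equiv.Perm.ofSubtype σ' y = (σ' ⟨y, hy⟩ : V) :=
    Equiv.Perm.ofSubtype_apply_of_mem σ' hy
  rw [insPerm, Equiv.Perm.mul_apply, h1]

lemma delPerm_insPerm (x v : V) (hv : v ≠ x) (σ' : Equiv.Perm {y : V // y ≠ x}) :
    delPerm x (insPerm x v σ') = σ' := by
  refine Equiv.ext fun a => Subtype.ext ?_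
  rw [delPerm_apply, insPerm_apply_self, insPerm_apply_ne x v σ' a.2,
    Equiv.swap_apply_self]

lemma insPerm_delPerm (x : V) (σ : Equiv.Perm V) :
    insPerm x (σ x) (delPerm x σ) = σ := by
  apply Equiv.ext
  intro y
  by_cases hy : y = x
  · subst hy; exact insPerm_apply_self _ _ _
  · rw [insPerm_apply_ne x (σ x) _ hy, delPerm_apply, Equiv.swap_apply_self]

lemma pow_delPerm (x : V) (σ : Equiv.Perm V) (hσx : σ x ≠ x) :
    ∀ (k : ℕ) (a : {y : V // y ≠ x}), (σ ^ k) (a : V) ≠ x →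
      ∃ k', ((delPerm x σ ^ k') a : V) = (σ ^ k) (a : V) := by
  intro k
  induction k using Nat.strong_induction_on with
  | _ k IH =>
    match k with
    | 0 => intro a _; exact ⟨0, rfl⟩
    | (k+1) =>
      intro a hk1
      by_cases hz : (σ ^ k) (a : V) = x
      · -- previous point is x; use k-1
        match k, hz with
        | 0, hz => exact absurd hz a.2
        | (k+1), hz =>
          have hw : (σ ^ k) (a : V) ≠ x := by
            intro hcon
            rw [pow_apply_succ, hcon] at hz
            exact hσx hz
          obtain ⟨k', hk'⟩ := IH k (by omega) a hw
          refine ⟨k' + 1, ?_⟩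
          rw [pow_apply_succ, delPerm_apply, hk', ← pow_apply_succ, hz,
            pow_apply_succ, hz, Equiv.swap_apply_left]
      · obtain ⟨k', hk'⟩ := IH k (by omega) a hz
        refine ⟨k' + 1, ?_⟩
        rw [pow_apply_succ, delPerm_apply, hk', pow_apply_succ]
        apply Equiv.swap_apply_of_ne_of_ne
        · rw [← pow_apply_succ]; exact hk1
        · intro hcon; exact hz (σ.injective hcon)

lemma pow_insPermDir (x : V) (σ : Equiv.Perm V) (hσx : σ x ≠ x) :
    ∀ (k' : ℕ) (a : {y : V // y ≠ x}),
      ∃ k, (σ ^ k) (a : V) = ((delPerm x σ ^ k') a : V) := by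
  intro k'
  induction k' with
  | zero => intro a; exact ⟨0, rfl⟩
  | succ k' IH =>
    intro a
    obtain ⟨k, hk⟩ := IH a
    rw [pow_apply_succ, delPerm_apply]
    by_cases h1 : σ ((delPerm x σ ^ k') a : V) = x
    · refine ⟨k + 2, ?_⟩
      rw [pow_apply_succ, pow_apply_succ, hk, h1]
      rw [Equiv.swap_apply_left]
    · have h2 : σ ((delPerm x σ ^ k') a : V) ≠ σ x := by
        intro hcon
        exact ((delPerm x σ ^ k') a).2 (σ.injective hcon)
      rw [Equiv.swap_apply_of_ne_of_ne h1 h2]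
      refine ⟨k + 1, ?_⟩
      rw [pow_apply_succ, hk]

lemma transP_delPerm (x : V) (σ : Equiv.Perm V) (hσx : σ x ≠ x) (h : TransP σ) :
    TransP (delPerm x σ) := by
  intro a b
  obtain ⟨k, hk⟩ := h (a : V) (b : V)
  obtain ⟨k', hk'⟩ := pow_delPerm x σ hσx k a (by rw [hk]; exact b.2)
  exact ⟨k', Subtype.ext (by rw [hk', hk])⟩

lemma transP_of_delPerm (x : V) (σ : Equiv.Perm V) (hσx : σ x ≠ x)
    (h : TransP (delPerm x σ)) : TransP σ := by
  have hsymm : σ.symm x ≠ x := by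
    intro hcon
    exact hσx (by conv_lhs => rw [← hcon, Equiv.apply_symm_apply])
  intro a b
  set a₀ : {y : V // y ≠ x} := if ha : a = x then ⟨σ x, hσx⟩ else ⟨a, ha⟩ with ha₀
  set b₀ : {y : V // y ≠ x} := if hb : b = x then ⟨σ.symm x, hsymm⟩ else ⟨b, hb⟩ with hb₀
  have ha' : ∃ ia, (σ ^ ia) a = (a₀ : V) := by
    by_cases ha : a = x
    · exact ⟨1, by simp [ha₀, ha, pow_one]⟩
    · exact ⟨0, by simp [ha₀, ha]⟩
  have hb' : ∃ ib, (σ ^ ib) (b₀ : V) = b := by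
    by_cases hb : b = x
    · exact ⟨1, by simp [hb₀, hb, pow_one]⟩
    · exact ⟨0, by simp [hb₀, hb]⟩
  obtain ⟨ia, hia⟩ := ha'
  obtain ⟨ib, hib⟩ := hb'
  obtain ⟨k', hk'⟩ := h a₀ b₀
  obtain ⟨k, hk⟩ := pow_insPermDir x σ hσx k' a₀
  refine ⟨ib + (k + ia), ?_⟩
  rw [pow_add, Equiv.Perm.mul_apply, pow_add, Equiv.Perm.mul_apply, hia, hk, hk', hib]

namespace Z1

lemma transP_apply_ne {V : Type} [Fintype V] {σ : Equiv.Perm V} (h : TransP σ)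
    (h2 : 2 ≤ Fintype.card V) (x : V) : σ x ≠ x := by
  intro hfix
  obtain ⟨z, hz⟩ := Fintype.exists_ne_of_one_lt_card (by omega) x
  obtain ⟨k, hk⟩ := h x z
  have hx : ∀ m : ℕ, (σ ^ m) x = x := by
    intro m
    induction m with
    | zero => rfl
    | succ m ih => rw [pow_apply_succ, ih, hfix]
  rw [hx k] at hk
  exact hz hk.symm

lemma countTrans_subsingleton (V : Type) [Fintype V] [DecidableEq V]
    (hcard : Fintype.card V ≤ 1) (M : Finset V) (s : V → V) :
    Nat.card {σ : Equiv.Perm V // (∀ x ∈ M, σ x = s x) ∧ TransP σ} = 1 := by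
  have hss : Subsingleton V := Fintype.card_le_one_iff_subsingleton.mp hcard
  have hall : ∀ σ : Equiv.Perm V, (∀ x ∈ M, σ x = s x) ∧ TransP σ := by
    intro σ
    exact ⟨fun x _ => Subsingleton.elim _ _, fun a b => ⟨0, Subsingleton.elim _ _⟩⟩
  rw [Nat.card_congr (Equiv.subtypeUnivEquiv hall)]
  rw [Nat.card_eq_fintype_card, Fintype.card_perm]
  interval_cases h : Fintype.card V <;> simp

lemma countTrans : ∀ (N : ℕ) (V : Type) [Fintype V] [DecidableEq V] (M : Finset V) (s : V → V),
    Fintype.card V = N → Set.InjOn s ↑M → (∀ x ∈ M, ∃ k, s^[k] x ∉ M) →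
    Nat.card {σ : Equiv.Perm V // (∀ x ∈ M, σ x = s x) ∧ TransP σ}
      = (N - M.card - 1).factorial := by
  intro N
  induction N with
  | zero =>
    intro V _ _ M s hcard hinj hacyc
    rw [countTrans_subsingleton V (by omega) M s]
    simp
  | succ N IH =>
    intro V _ _ M s hcard hinj hacyc
    by_cases hN : N = 0
    · subst hN
      rw [countTrans_subsingleton V (by omega) M s]
      have hM : M.card ≤ 1 := by
        have := Finset.card_le_univ M
        omega
      have : 1 - M.card - 1 = 0 := by omega
      rw [this]
      rfl
    · have hN2 : 2 ≤ Fintype.card V := by omega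
      have hNpos : 0 < N := by omega
      have hcard_ne : ∀ x : V, Fintype.card {y : V // y ≠ x} = N := by
        intro x
        have h1 : Fintype.card {y : V // ¬ (y = x)} =
            Fintype.card V - Fintype.card {y : V // y = x} :=
          Fintype.card_subtype_compl _
        have h2 : Fintype.card {y : V // y = x} = 1 := Fintype.card_subtype_eq x
        have h3 : Fintype.card {y : V // y ≠ x} = Fintype.card {y : V // ¬ (y = x)} := rfl
        rw [h3, h1, h2, hcard]
        omega
      rcases M.eq_empty_or_nonempty with hM | hM
      · -- M = ∅ : count all transitive permutations
        subst hM
        have hne : Nonempty V := Fintype.card_pos_iff.mp (by omega)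
        obtain ⟨x⟩ := hne
        set s' : {y : V // y ≠ x} → {y : V // y ≠ x} := fun y => y with hs'
        have key := IH {y : V // y ≠ x} (∅ : Finset _) s' (hcard_ne x)
          (by intro a _ b _ h; exact h) (by intro a ha; exact absurd ha (Finset.notMem_empty a))
        have hEx : ∀ σ : Equiv.Perm V, TransP σ → σ x ≠ x :=
          fun σ h => transP_apply_ne h hN2 x
        have hTins : ∀ (v : {y : V // y ≠ x}) (σ' : Equiv.Perm {y : V // y ≠ x}),
            TransP σ' → TransP (insPerm x (v : V) σ') := by
          intro v σ' h
          have h2 : insPerm x (v : V) σ' x ≠ x := by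
            rw [insPerm_apply_self]; exact v.2
          apply transP_of_delPerm x _ h2
          rw [delPerm_insPerm x _ v.2 σ']
          exact h
        have E : {σ : Equiv.Perm V // (∀ z ∈ (∅ : Finset V), σ z = s z) ∧ TransP σ} ≃
            ({y : V // y ≠ x} × {σ' : Equiv.Perm {y : V // y ≠ x} //
              (∀ z ∈ (∅ : Finset {y : V // y ≠ x}), σ' z = s' z) ∧ TransP σ'}) :=
          { toFun := fun σ => (⟨σ.1 x, hEx σ.1 σ.2.2⟩,
              ⟨delPerm x σ.1, fun z hz => absurd hz (Finset.notMem_empty z),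
               transP_delPerm x σ.1 (hEx σ.1 σ.2.2) σ.2.2⟩)
            invFun := fun p => ⟨insPerm x (p.1 : V) p.2.1,
              fun z hz => absurd hz (Finset.notMem_empty z), hTins p.1 p.2.1 p.2.2.2⟩
            left_inv := fun σ => Subtype.ext (insPerm_delPerm x σ.1)
            right_inv := fun p => by
              obtain ⟨v, σ'⟩ := p
              have h1 : insPerm x (v : V) σ'.1 x = (v : V) := insPerm_apply_self _ _ _
              refine Prod.ext (Subtype.ext ?_) (Subtype.ext ?_)
              · exact h1
              · show delPerm x (insPerm x (v : V) σ'.1) = σ'.1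
                exact delPerm_insPerm x _ v.2 σ'.1 }
        rw [Nat.card_congr E, Nat.card_prod, key, Nat.card_eq_fintype_card, hcard_ne x]
        simp only [Finset.card_empty, Nat.sub_zero]
        exact Nat.mul_factorial_pred hNpos.ne'
      · -- M nonempty
        obtain ⟨x, hx⟩ := hM
        have hsx : s x ≠ x := by
          intro hfix
          obtain ⟨k, hk⟩ := hacyc x hx
          exact hk (by rw [Function.iterate_fixed hfix]; exact hx)
        have hMle : M.card ≤ N + 1 := by rw [← hcard]; exact Finset.card_le_univ M
        have hMpos : 1 ≤ M.card := Finset.card_pos.mpr ⟨x, hx⟩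
        set M' : Finset {y : V // y ≠ x} := (M.erase x).subtype (fun y => y ≠ x) with hM'
        set s' : {y : V // y ≠ x} → {y : V // y ≠ x} :=
          fun y => if h : s (y : V) = x then ⟨s x, hsx⟩ else ⟨s (y : V), h⟩ with hs'
        have hmemM' : ∀ y : {y : V // y ≠ x}, y ∈ M' ↔ ((y : V) ∈ M ∧ (y : V) ≠ x) := by
          intro y; rw [hM', Finset.mem_subtype, Finset.mem_erase]; tauto
        have hs'pos : ∀ (y : {y : V // y ≠ x}) (h : s (y : V) = x), s' y = ⟨s x, hsx⟩ := by
          intro y h; rw [hs']; simp only [dif_pos h]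
        have hs'neg : ∀ (y : {y : V // y ≠ x}) (h : ¬ (s (y : V) = x)),
            s' y = ⟨s (y : V), h⟩ := by
          intro y h; rw [hs']; simp only [dif_neg h]
        have hinj' : Set.InjOn s' ↑M' := by
          intro y₁ h₁ y₂ h₂ heq
          rw [Finset.mem_coe, hmemM'] at h₁ h₂
          apply Subtype.ext
          by_cases e₁ : s (y₁ : V) = x <;> by_cases e₂ : s (y₂ : V) = x
          · exact hinj h₁.1 h₂.1 (e₁.trans e₂.symm)
          · rw [hs'pos y₁ e₁, hs'neg y₂ e₂] at heq
            exact absurd (hinj hx h₂.1 (Subtype.ext_iff.mp heq)).symm h₂.2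
          · rw [hs'neg y₁ e₁, hs'pos y₂ e₂] at heq
            exact absurd (hinj h₁.1 hx (Subtype.ext_iff.mp heq)) h₁.2
          · rw [hs'neg y₁ e₁, hs'neg y₂ e₂] at heq
            exact hinj h₁.1 h₂.1 (Subtype.ext_iff.mp heq)
        have hacyc' : ∀ y ∈ M', ∃ k, s'^[k] y ∉ M' := by
          have main : ∀ (k : ℕ) (y : {y : V // y ≠ x}), (y : V) ∈ M → s^[k] (y : V) ∉ M →
              ∃ k', s'^[k'] y ∉ M' := by
            intro k
            induction k using Nat.strong_induction_on with
            | _ k IHk =>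
              intro y hyM hyk
              match k, hyk with
              | 0, hyk => exact absurd hyM hyk
              | (k+1), hyk =>
                by_cases h1 : s (y : V) = x
                · by_cases h2 : s x ∈ M
                  · match k, hyk with
                    | 0, hyk =>
                      exact absurd (by
                        rw [Function.iterate_succ_apply, Function.iterate_zero_apply, h1]
                        exact hx) hyk
                    | (k+1), hyk =>
                      have h2y : s^[2] (y : V) = s x := by
                        rw [show (2:ℕ) = 1 + 1 from rfl, Function.iterate_add_apply,
                          Function.iterate_one, h1]
                      have hk2 : s^[k] (s x) ∉ M := by
                        rw [← h2y, ← Function.iterate_add_apply]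
                        exact hyk
                      obtain ⟨k'', hk''⟩ := IHk k (by omega) ⟨s x, hsx⟩ h2 hk2
                      refine ⟨k'' + 1, ?_⟩
                      rw [Function.iterate_succ_apply, hs'pos y h1]
                      exact hk''
                  · refine ⟨1, ?_⟩
                    rw [Function.iterate_one, hs'pos y h1]
                    exact fun hmem => h2 ((hmemM' _).mp hmem).1
                · by_cases h2 : s (y : V) ∈ M
                  · have hk2 : s^[k] (s (y : V)) ∉ M := by
                      rw [← Function.iterate_succ_apply]
                      exact hyk
                    obtain ⟨k'', hk''⟩ := IHk k (by omega) ⟨s (y : V), h1⟩ h2 hk2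
                    refine ⟨k'' + 1, ?_⟩
                    rw [Function.iterate_succ_apply, hs'neg y h1]
                    exact hk''
                  · refine ⟨1, ?_⟩
                    rw [Function.iterate_one, hs'neg y h1]
                    exact fun hmem => h2 ((hmemM' _).mp hmem).1
          intro y hy
          obtain ⟨k, hk⟩ := hacyc (y : V) (((hmemM' y).mp hy).1)
          exact main k y (((hmemM' y).mp hy).1) hk
        have hdel_ext : ∀ (σ : Equiv.Perm V), (∀ z ∈ M, σ z = s z) →
            ∀ z ∈ M', delPerm x σ z = s' z := by
          intro σ hσ z hz
          obtain ⟨hzM, hzx⟩ := (hmemM' z).mp hz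
          apply Subtype.ext
          rw [delPerm_apply, hσ x hx, hσ (z : V) hzM]
          by_cases h1 : s (z : V) = x
          · rw [hs'pos z h1, h1, Equiv.swap_apply_left]
          · rw [hs'neg z h1]
            exact Equiv.swap_apply_of_ne_of_ne h1
              (fun hcon => hzx (hinj hzM hx hcon))
        have hins_ext : ∀ (σ' : Equiv.Perm {y : V // y ≠ x}), (∀ z ∈ M', σ' z = s' z) →
            ∀ z ∈ M, insPerm x (s x) σ' z = s z := by
          intro σ' hσ' z hz
          by_cases hzx : z = x
          · subst hzx; rw [insPerm_apply_self]
          · rw [insPerm_apply_ne x (s x) σ' hzx]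
            have hz' : (⟨z, hzx⟩ : {y : V // y ≠ x}) ∈ M' := (hmemM' _).mpr ⟨hz, hzx⟩
            rw [hσ' _ hz']
            by_cases h1 : s z = x
            · rw [hs'pos _ h1]
              show Equiv.swap x (s x) (s x) = s z
              rw [Equiv.swap_apply_right, h1]
            · rw [hs'neg _ h1]
              exact Equiv.swap_apply_of_ne_of_ne h1
                (fun hcon => hzx (hinj hz hx hcon))
        have hTdel : ∀ (σ : Equiv.Perm V), (∀ z ∈ M, σ z = s z) → TransP σ →
            TransP (delPerm x σ) := by
          intro σ hσ h
          exact transP_delPerm x σ (by rw [hσ x hx]; exact hsx) h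
        have hTins : ∀ (σ' : Equiv.Perm {y : V // y ≠ x}), TransP σ' →
            TransP (insPerm x (s x) σ') := by
          intro σ' h
          have h2 : insPerm x (s x) σ' x ≠ x := by rw [insPerm_apply_self]; exact hsx
          apply transP_of_delPerm x _ h2
          rw [delPerm_insPerm x _ hsx σ']
          exact h
        have E : {σ : Equiv.Perm V // (∀ z ∈ M, σ z = s z) ∧ TransP σ} ≃
            {σ' : Equiv.Perm {y : V // y ≠ x} // (∀ z ∈ M', σ' z = s' z) ∧ TransP σ'} :=
          { toFun := fun σ => ⟨delPerm x σ.1, hdel_ext σ.1 σ.2.1 , hTdel σ.1 σ.2.1 σ.2.2⟩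
            invFun := fun σ' => ⟨insPerm x (s x) σ'.1, hins_ext σ'.1 σ'.2.1, hTins σ'.1 σ'.2.2⟩
            left_inv := fun σ => Subtype.ext (by
              have h := insPerm_delPerm x σ.1
              rw [σ.2.1 x hx] at h
              exact h)
            right_inv := fun σ' => Subtype.ext (delPerm_insPerm x (s x) hsx σ'.1) }
        rw [Nat.card_congr E, IH _ M' s' (hcard_ne x) hinj' hacyc']
        have hMcard : M'.card = M.card - 1 := by
          rw [hM', Finset.card_subtype,
            Finset.filter_true_of_mem (fun y hy => (Finset.mem_erase.mp hy).1),
            Finset.card_erase_of_mem hx]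
        rw [hMcard]
        congr 1
        omega
end Z1
end Stmt10

namespace Stmt10
open Equiv Finset

open Classical in
noncomputable def validM {n : ℕ} (X : Set (ℕ × ℕ)) (τ : Equiv.Perm (Fin n)) :
    Finset (Finset (Fin n)) :=
  Finset.univ.filter (fun M => (∀ x ∈ M, τ x ≠ x ∧ (((x:ℕ)+1, ((τ x : Fin n) : ℕ)+1) ∈ X)) ∧
    ∀ x, ∃ k : ℕ, (τ ^ k) x ∉ M)

lemma mem_validM {n : ℕ} (X : Set (ℕ × ℕ)) (τ : Equiv.Perm (Fin n)) (M : Finset (Fin n)) :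
    M ∈ validM X τ ↔ ((∀ x ∈ M, τ x ≠ x ∧ (((x:ℕ)+1, ((τ x : Fin n) : ℕ)+1) ∈ X)) ∧
      ∀ x, ∃ k : ℕ, (τ ^ k) x ∉ M) := by
  simp [validM]

lemma validM_subset {n : ℕ} (X : Set (ℕ × ℕ)) (υ : Equiv.Perm (Fin n)) {M : Finset (Fin n)}
    (h : M ∈ validM X υ) : M ⊆ υ.support :=
  fun x hx => Equiv.Perm.mem_support.mpr (((mem_validM X υ M).mp h).1 x hx).1

lemma val_ne_of_apply_ne {n : ℕ} {c : Equiv.Perm (Fin n)} {x : Fin n} (h : c x ≠ x) :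
    ((x:ℕ)+1) ≠ (((c x : Fin n) :ℕ)+1) :=
  fun he => h (Fin.val_injective (show ((c x : Fin n):ℕ) = (x:ℕ) by omega))

lemma neg_neg_one_pow (m : ℕ) (hm : 1 ≤ m) : -((-1:ℤ)^m) = (-1:ℤ)^(m-1) := by
  conv_lhs => rw [show m = (m-1)+1 by omega]
  rw [pow_succ]
  ring

open Classical in
lemma sum_validM {n : ℕ} (X : Set (ℕ × ℕ)) (τ : Equiv.Perm (Fin n)) :
    ∑ M ∈ validM X τ, (-1 : ℤ) ^ M.card =
      if (∀ c ∈ τ.cycleFactorsFinset, isGcycle X c ∨ isGbarCycle X c)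
      then (-1 : ℤ) ^ (∑ c ∈ τ.cycleFactorsFinset.filter (fun c => isGbarCycle X c),
        (c.support.card - 1))
      else 0 := by
  induction τ using Equiv.Perm.cycle_induction_on with
  | base_one =>
    have hval : validM X (1 : Equiv.Perm (Fin n)) = {∅} := by
      ext M
      rw [mem_validM, Finset.mem_singleton]
      constructor
      · rintro ⟨hi, -⟩
        rw [Finset.eq_empty_iff_forall_notMem]
        intro x hx
        exact (hi x hx).1 rfl
      · rintro rfl
        exact ⟨fun x hx => absurd hx (Finset.notMem_empty x),
          fun x => ⟨0, Finset.notMem_empty x⟩⟩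
    rw [hval, Finset.sum_singleton, Finset.card_empty, pow_zero,
      Equiv.Perm.cycleFactorsFinset_one]
    rw [if_pos (fun c hc => absurd hc (Finset.notMem_empty c))]
    simp
  | base_cycles c hc =>
    set D := c.support.filter (fun x : Fin n => (((x:ℕ)+1, ((c x : Fin n) : ℕ)+1) ∈ X)) with hD
    have hDsub : D ⊆ c.support := Finset.filter_subset _ _
    have hmem : ∀ M, M ∈ validM X c ↔ (M ⊆ D ∧ ¬ (c.support ⊆ M)) := by
      intro M
      rw [mem_validM]
      constructor
      · rintro ⟨hi, hii⟩
        constructor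
        · intro x hx
          rw [hD, Finset.mem_filter]
          exact ⟨Equiv.Perm.mem_support.mpr (hi x hx).1, (hi x hx).2⟩
        · intro hsub
          obtain ⟨x, hxs⟩ := hc.nonempty_support
          obtain ⟨k, hk⟩ := hii x
          exact hk (hsub (Equiv.Perm.pow_apply_mem_support.mpr hxs))
      · rintro ⟨hMD, hns⟩
        refine ⟨fun x hx => ?_, fun x => ?_⟩
        · have h := hMD hx
          rw [hD, Finset.mem_filter] at h
          exact ⟨Equiv.Perm.mem_support.mp h.1, h.2⟩
        · by_cases hxs : x ∈ c.support
          · obtain ⟨y, hys, hyM⟩ := Finset.not_subset.mp hns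
            obtain ⟨i, hi⟩ := hc.exists_pow_eq (Equiv.Perm.mem_support.mp hxs)
              (Equiv.Perm.mem_support.mp hys)
            exact ⟨i, by rw [hi]; exact hyM⟩
          · refine ⟨0, fun hmem => ?_⟩
            rw [pow_zero] at hmem
            exact hxs (hDsub (hMD (by simpa using hmem)))
    rw [hc.cycleFactorsFinset_eq_singleton]
    by_cases hDs : D = c.support
    · -- Gbar cycle
      have hbar : isGbarCycle X c := by
        intro x hx
        have hxD : x ∈ D := by rw [hDs]; exact hx
        rw [hD, Finset.mem_filter] at hxD
        exact ⟨val_ne_of_apply_ne (Equiv.Perm.mem_support.mp hx), hxD.2⟩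
      have hval : validM X c = D.powerset.erase c.support := by
        ext M
        rw [hmem, Finset.mem_erase, Finset.mem_powerset]
        constructor
        · rintro ⟨h1, h2⟩
          refine ⟨fun hMeq => h2 (by rw [hMeq]), h1⟩
        · rintro ⟨h1, h2⟩
          refine ⟨h2, fun hsub => h1 ?_⟩
          apply Finset.Subset.antisymm
          · rw [← hDs]; exact h2
          · exact hsub
      have hsuppmem : c.support ∈ D.powerset := by rw [hDs]; exact Finset.mem_powerset_self _
      have h1 := Finset.sum_erase_add D.powerset (fun M => (-1:ℤ)^M.card) hsuppmem
      have h0 : ∑ M ∈ D.powerset, (-1:ℤ)^M.card = 0 := by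
        rw [Finset.sum_powerset_neg_one_pow_card, if_neg]
        intro hD0
        rw [hD0] at hDs
        exact absurd hDs.symm (Finset.nonempty_iff_ne_empty.mp hc.nonempty_support)
      rw [hval]
      have h2 : ∑ M ∈ D.powerset.erase c.support, (-1:ℤ)^M.card
          = -((-1:ℤ)^c.support.card) := by
        rw [h0] at h1
        linarith
      rw [h2, neg_neg_one_pow _ (by have := hc.two_le_card_support; omega)]
      rw [if_pos (by intro c' hc'; rw [Finset.mem_singleton] at hc'; subst hc'; exact Or.inr hbar)]
      rw [Finset.filter_singleton, if_pos hbar, Finset.sum_singleton]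
    · -- not a Gbar cycle
      have hnbar : ¬ isGbarCycle X c := by
        intro hbar
        exact hDs (Finset.Subset.antisymm hDsub (fun x hx =>
          Finset.mem_filter.mpr ⟨hx, (hbar x hx).2⟩))
      have hval : validM X c = D.powerset := by
        ext M
        rw [hmem, Finset.mem_powerset]
        constructor
        · exact fun h => h.1
        · intro h
          exact ⟨h, fun hsub => hDs (Finset.Subset.antisymm hDsub (hsub.trans h))⟩
      rw [hval, Finset.sum_powerset_neg_one_pow_card]
      rw [Finset.filter_singleton, if_neg hnbar, Finset.sum_empty, pow_zero]
      by_cases hD0 : D = ∅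
      · have hgc : isGcycle X c := by
          intro x hx
          refine ⟨val_ne_of_apply_ne (Equiv.Perm.mem_support.mp hx), fun harc => ?_⟩
          have : x ∈ D := by rw [hD, Finset.mem_filter]; exact ⟨hx, harc⟩
          rw [hD0] at this
          exact Finset.notMem_empty x this
        rw [if_pos hD0, if_pos (by
          intro c' hc'; rw [Finset.mem_singleton] at hc'; subst hc'; exact Or.inl hgc)]
      · have hngc : ¬ isGcycle X c := by
          intro hgc
          apply hD0
          rw [Finset.eq_empty_iff_forall_notMem]
          intro x hxD
          rw [hD, Finset.mem_filter] at hxD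
          exact (hgc x hxD.1).2 hxD.2
        rw [if_neg hD0, if_neg (by
          intro hcond
          rcases hcond c (Finset.mem_singleton_self c) with h | h
          · exact hngc h
          · exact hnbar h)]
  | induction_disjoint ς τ hdisj hςcyc Eς Eτ =>
    have hsd : Disjoint ς.support τ.support := hdisj.disjoint_support
    have happly₁ : ∀ x ∈ ς.support, (ς * τ) x = ς x := by
      intro x hx
      have h : τ x = x := Equiv.Perm.notMem_support.mp (Finset.disjoint_left.mp hsd hx)
      rw [Equiv.Perm.mul_apply, h]
    have happly₂ : ∀ x ∈ τ.support, (ς * τ) x = τ x := by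
      intro x hx
      have h1 : τ x ∈ τ.support := Equiv.Perm.apply_mem_support.mpr hx
      have h : ς (τ x) = τ x := Equiv.Perm.notMem_support.mp (Finset.disjoint_right.mp hsd h1)
      rw [Equiv.Perm.mul_apply, h]
    have hpowmul : ∀ k : ℕ, (ς * τ)^k = ς^k * τ^k := fun k => hdisj.commute.mul_pow k
    have hpow₁ : ∀ x ∈ ς.support, ∀ k : ℕ, ((ς * τ)^k) x = (ς^k) x := by
      intro x hx k
      rw [hpowmul, Equiv.Perm.mul_apply,
        Equiv.Perm.pow_apply_eq_self_of_apply_eq_self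
          (Equiv.Perm.notMem_support.mp (Finset.disjoint_left.mp hsd hx)) k]
    have hpow₂ : ∀ x : Fin n, x ∉ ς.support → ∀ k : ℕ, ((ς * τ)^k) x = (τ^k) x := by
      intro x hx k
      rw [hpowmul, Equiv.Perm.mul_apply]
      by_cases hxt : x ∈ τ.support
      · have hm : (τ^k) x ∈ τ.support := Equiv.Perm.pow_apply_mem_support.mpr hxt
        exact Equiv.Perm.pow_apply_eq_self_of_apply_eq_self
          (Equiv.Perm.notMem_support.mp (Finset.disjoint_right.mp hsd hm)) k
      · have h1 : (τ^k) x = x := Equiv.Perm.pow_apply_eq_self_of_apply_eq_self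
          (Equiv.Perm.notMem_support.mp hxt) k
        rw [h1]
        exact Equiv.Perm.pow_apply_eq_self_of_apply_eq_self
          (Equiv.Perm.notMem_support.mp hx) k
    have hforward : ∀ M ∈ validM X (ς * τ),
        M ∩ ς.support ∈ validM X ς ∧ M ∩ τ.support ∈ validM X τ := by
      intro M hM
      obtain ⟨hi, hii⟩ := (mem_validM X (ς * τ) M).mp hM
      constructor
      · rw [mem_validM]
        refine ⟨fun x hx => ?_, fun x => ?_⟩
        · obtain ⟨hxM, hxs⟩ := Finset.mem_inter.mp hx
          have h := hi x hxM
          rw [happly₁ x hxs] at h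
          exact h
        · by_cases hxs : x ∈ ς.support
          · obtain ⟨k, hk⟩ := hii x
            refine ⟨k, fun hmem => hk ?_⟩
            rw [hpow₁ x hxs k]
            exact (Finset.mem_inter.mp hmem).1
          · exact ⟨0, fun hmem => hxs (Finset.mem_inter.mp (by simpa using hmem)).2⟩
      · rw [mem_validM]
        refine ⟨fun x hx => ?_, fun x => ?_⟩
        · obtain ⟨hxM, hxs⟩ := Finset.mem_inter.mp hx
          have h := hi x hxM
          rw [happly₂ x hxs] at h
          exact h
        · by_cases hxt : x ∈ τ.support
          · have hxs : x ∉ ς.support := Finset.disjoint_right.mp hsd hxt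
            obtain ⟨k, hk⟩ := hii x
            refine ⟨k, fun hmem => hk ?_⟩
            rw [hpow₂ x hxs k]
            exact (Finset.mem_inter.mp hmem).1
          · exact ⟨0, fun hmem => hxt (Finset.mem_inter.mp (by simpa using hmem)).2⟩
    have hbackward : ∀ M₁ ∈ validM X ς, ∀ M₂ ∈ validM X τ, M₁ ∪ M₂ ∈ validM X (ς * τ) := by
      intro M₁ hM₁ M₂ hM₂
      have hs₁ := validM_subset X ς hM₁
      have hs₂ := validM_subset X τ hM₂
      obtain ⟨hi₁, hii₁⟩ := (mem_validM X ς M₁).mp hM₁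
      obtain ⟨hi₂, hii₂⟩ := (mem_validM X τ M₂).mp hM₂
      rw [mem_validM]
      constructor
      · intro x hx
        rcases Finset.mem_union.mp hx with hx₁ | hx₂
        · have h := hi₁ x hx₁
          rw [← happly₁ x (hs₁ hx₁)] at h
          exact h
        · have h := hi₂ x hx₂
          rw [← happly₂ x (hs₂ hx₂)] at h
          exact h
      · intro x
        by_cases hxs : x ∈ ς.support
        · obtain ⟨k, hk⟩ := hii₁ x
          refine ⟨k, fun hmem => ?_⟩
          rw [hpow₁ x hxs k] at hmem
          rcases Finset.mem_union.mp hmem with h | h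
          · exact hk h
          · exact Finset.disjoint_left.mp hsd
              (Equiv.Perm.pow_apply_mem_support.mpr hxs) (hs₂ h)
        · by_cases hxt : x ∈ τ.support
          · obtain ⟨k, hk⟩ := hii₂ x
            refine ⟨k, fun hmem => ?_⟩
            rw [hpow₂ x hxs k] at hmem
            rcases Finset.mem_union.mp hmem with h | h
            · exact Finset.disjoint_right.mp hsd
                (Equiv.Perm.pow_apply_mem_support.mpr hxt) (hs₁ h)
            · exact hk h
          · refine ⟨0, fun hmem => ?_⟩
            rw [pow_zero] at hmem
            rcases Finset.mem_union.mp (by simpa using hmem : x ∈ M₁ ∪ M₂) with h | h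
            · exact hxs (hs₁ h)
            · exact hxt (hs₂ h)
    have hMsplit : ∀ M ∈ validM X (ς * τ), M ∩ ς.support ∪ M ∩ τ.support = M := by
      intro M hM
      have hsub : M ⊆ ς.support ∪ τ.support := fun x hx =>
        Equiv.Perm.support_mul_le ς τ (validM_subset X _ hM hx)
      rw [← Finset.inter_union_distrib_left]
      exact Finset.inter_eq_left.mpr hsub
    have hsum : ∑ M ∈ validM X (ς*τ), (-1:ℤ)^M.card
        = (∑ M ∈ validM X ς, (-1:ℤ)^M.card) * (∑ M ∈ validM X τ, (-1:ℤ)^M.card) := by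
      rw [Finset.sum_mul_sum, ← Finset.sum_product']
      apply Finset.sum_nbij' (fun M => (M ∩ ς.support, M ∩ τ.support)) (fun p => p.1 ∪ p.2)
      · intro M hM
        rw [Finset.mem_product]
        exact hforward M hM
      · intro p hp
        rw [Finset.mem_product] at hp
        exact hbackward p.1 hp.1 p.2 hp.2
      · intro M hM
        exact hMsplit M hM
      · intro p hp
        rw [Finset.mem_product] at hp
        have h1 := validM_subset X ς hp.1
        have h2 := validM_subset X τ hp.2
        have hd2 : Disjoint p.2 ς.support := Disjoint.mono_left h2 hsd.symm
        have hd1 : Disjoint p.1 τ.support := Disjoint.mono_left h1 hsd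
        have e1 : (p.1 ∪ p.2) ∩ ς.support = p.1 := by
          rw [Finset.union_inter_distrib_right, Finset.inter_eq_left.mpr h1,
            Finset.disjoint_iff_inter_eq_empty.mp hd2, Finset.union_empty]
        have e2 : (p.1 ∪ p.2) ∩ τ.support = p.2 := by
          rw [Finset.union_inter_distrib_right, Finset.inter_eq_left.mpr h2,
            Finset.disjoint_iff_inter_eq_empty.mp hd1, Finset.empty_union]
        exact Prod.ext e1 e2
      · intro M hM
        rw [← pow_add]
        congr 1
        rw [← Finset.card_union_of_disjoint
          (hsd.mono (Finset.inter_subset_right) (Finset.inter_subset_right)), hMsplit M hM]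
    rw [hsum, Eς, Eτ, hdisj.cycleFactorsFinset_mul_eq_union]
    have hCFdisj : Disjoint ς.cycleFactorsFinset τ.cycleFactorsFinset := by
      rw [Finset.disjoint_left]
      intro c hc₁ hc₂
      have h1 : c.support ⊆ ς.support := Equiv.Perm.mem_cycleFactorsFinset_support_le hc₁
      have h2 : c.support ⊆ τ.support := Equiv.Perm.mem_cycleFactorsFinset_support_le hc₂
      obtain ⟨x, hx⟩ := (Equiv.Perm.mem_cycleFactorsFinset_iff.mp hc₁).1.nonempty_support
      exact Finset.disjoint_left.mp hsd (h1 hx) (h2 hx)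
    rw [Finset.filter_union]
    by_cases h1 : (∀ c ∈ ς.cycleFactorsFinset, isGcycle X c ∨ isGbarCycle X c) <;>
      by_cases h2 : (∀ c ∈ τ.cycleFactorsFinset, isGcycle X c ∨ isGbarCycle X c)
    · rw [if_pos h1, if_pos h2, if_pos (Finset.forall_mem_union.mpr ⟨h1, h2⟩), ← pow_add,
        Finset.sum_union (hCFdisj.mono (Finset.filter_subset _ _) (Finset.filter_subset _ _))]
    · rw [if_pos h1, if_neg h2, mul_zero,
        if_neg (fun hcond => h2 (Finset.forall_mem_union.mp hcond).2)]
    · rw [if_neg h1, zero_mul,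
        if_neg (fun hcond => h1 (Finset.forall_mem_union.mp hcond).1)]
    · rw [if_neg h1, zero_mul,
        if_neg (fun hcond => h1 (Finset.forall_mem_union.mp hcond).1)]

end Stmt10

namespace Stmt10
open Equiv Finset

lemma conj_pow_eq {G : Type*} [Group G] (a b : G) (k : ℕ) :
    (a * b * a⁻¹)^k = a * b^k * a⁻¹ := by
  induction k with
  | zero => simp
  | succ k ih => rw [pow_succ, pow_succ, ih]; group

lemma finRotate_val {n : ℕ} (i : Fin (n+1)) :
    ((finRotate (n+1) i) : ℕ) = ((i:ℕ)+1) % (n+1) := by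
  rw [finRotate_succ_apply, Fin.add_def]
  simp only [Fin.val_one']
  conv_rhs => rw [Nat.add_mod]
  conv_lhs => rw [Nat.add_mod]
  rw [Nat.mod_mod_of_dvd 1 dvd_rfl]

lemma finRotate_val_lt {n : ℕ} {i : Fin n} (h : (i:ℕ)+1 < n) :
    ((finRotate n i : Fin n) : ℕ) = (i:ℕ)+1 := by
  match n, i with
  | (n+1), i =>
    rw [finRotate_val]
    exact Nat.mod_eq_of_lt h

lemma pow_finRotate_val {n : ℕ} (k : ℕ) (i : Fin (n+1)) :
    (((finRotate (n+1) ^ k) i) : ℕ) = ((i:ℕ) + k) % (n+1) := by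
  induction k with
  | zero => simp [Nat.mod_eq_of_lt i.isLt]
  | succ k ih =>
    rw [pow_apply_succ, finRotate_val, ih, Nat.mod_add_mod, Nat.add_assoc]

lemma transP_finRotate (n : ℕ) : TransP (finRotate n) := by
  match n with
  | 0 => intro a; exact absurd a.isLt (by omega)
  | (n+1) =>
    intro a b
    refine ⟨(b:ℕ) + (n+1) - (a:ℕ), ?_⟩
    apply Fin.val_injective
    rw [pow_finRotate_val]
    have h1 : (a:ℕ) < n+1 := a.isLt
    have h2 : (b:ℕ) < n+1 := b.isLt
    rw [show (a:ℕ) + ((b:ℕ) + (n+1) - (a:ℕ)) = (b:ℕ) + (n+1) by omega,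
      Nat.add_mod_right, Nat.mod_eq_of_lt h2]

lemma transP_conj {n : ℕ} (g : Equiv.Perm (Fin n)) (σ : Equiv.Perm (Fin n)) (h : TransP σ) :
    TransP (g * σ * g⁻¹) := by
  intro a b
  obtain ⟨k, hk⟩ := h (g⁻¹ a) (g⁻¹ b)
  refine ⟨k, ?_⟩
  rw [conj_pow_eq, Equiv.Perm.mul_apply, Equiv.Perm.mul_apply, hk]
  simp

lemma transP_pow_card {n : ℕ} {σ : Equiv.Perm (Fin n)} (h : TransP σ) : σ ^ n = 1 := by
  rcases le_or_gt n 1 with hn | hn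
  · interval_cases n
    · rfl
    · have : Subsingleton (Fin 1) := by infer_instance
      apply Equiv.ext
      intro x
      exact Subsingleton.elim _ _
  · have hc : 2 ≤ Fintype.card (Fin n) := by rw [Fintype.card_fin]; omega
    have hne : ∀ y : Fin n, σ y ≠ y := fun y => Z1.transP_apply_ne h hc y
    obtain ⟨x⟩ : Nonempty (Fin n) := ⟨⟨0, by omega⟩⟩
    have hcycle : σ.IsCycle := by
      refine ⟨x, hne x, fun y _ => ?_⟩
      obtain ⟨k, hk⟩ := h x y
      exact ⟨(k : ℤ), by rw [zpow_natCast]; exact hk⟩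
    have hsupp : σ.support = Finset.univ :=
      Finset.eq_univ_iff_forall.mpr (fun y => Equiv.Perm.mem_support.mpr (hne y))
    have ho : orderOf σ = n := by
      rw [hcycle.orderOf, hsupp, Finset.card_univ, Fintype.card_fin]
    have hp := pow_orderOf_eq_one σ
    rwa [ho] at hp

end Stmt10

namespace Stmt10
open Equiv Finset

open Classical in
noncomputable def GA {n : ℕ} (M : Finset (Fin n)) (s : Fin n → Fin n) :
    Finset (Equiv.Perm (Fin n)) :=
  Finset.univ.filter (fun g => ∀ x ∈ M,
    ((g.symm x : Fin n) : ℕ) + 1 < n ∧ g (finRotate n (g.symm x)) = s x)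

open Classical in
noncomputable def GB {n : ℕ} (M : Finset (Fin n)) (s : Fin n → Fin n) :
    Finset (Equiv.Perm (Fin n)) :=
  Finset.univ.filter (fun τ => ∀ x ∈ M, τ x = s x)

lemma mem_GA {n : ℕ} {M : Finset (Fin n)} {s : Fin n → Fin n} {g : Equiv.Perm (Fin n)} :
    g ∈ GA M s ↔ ∀ x ∈ M,
      ((g.symm x : Fin n) : ℕ) + 1 < n ∧ g (finRotate n (g.symm x)) = s x := by
  simp [GA]

lemma mem_GB {n : ℕ} {M : Finset (Fin n)} {s : Fin n → Fin n} {τ : Equiv.Perm (Fin n)} :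
    τ ∈ GB M s ↔ ∀ x ∈ M, τ x = s x := by
  simp [GB]

lemma gfun_injective {n : ℕ} {σ : Equiv.Perm (Fin n)} (hT : TransP σ) (h : Fin n) :
    Function.Injective (fun i : Fin n => (σ ^ (i : ℕ)) h) := by
  have key : ∀ a b : ℕ, a < b → b < n → (σ^a) h = (σ^b) h → False := by
    intro a b hab hbn heq
    set d := b - a with hd
    have hdpos : 0 < d := by omega
    have hdh : (σ^d) h = h := by
      have h2 : (σ^a) ((σ^d) h) = (σ^a) h := by
        rw [← Equiv.Perm.mul_apply, ← pow_add, show a + d = b by omega]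
        exact heq.symm
      exact (σ^a).injective h2
    have hmul : ∀ q : ℕ, (σ^(d*q)) h = h := by
      intro q
      induction q with
      | zero => simp
      | succ q ih =>
        rw [Nat.mul_succ, pow_add, Equiv.Perm.mul_apply, hdh, ih]
    have hall : ∀ y : Fin n, ∃ k, k < d ∧ (σ^k) h = y := by
      intro y
      obtain ⟨k, hk⟩ := hT h y
      refine ⟨k % d, Nat.mod_lt _ hdpos, ?_⟩
      have h3 : (σ^(k % d)) ((σ^(d * (k/d))) h) = (σ^k) h := by
        rw [← Equiv.Perm.mul_apply, ← pow_add, Nat.mod_add_div]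
      rw [hmul] at h3
      rw [h3]
      exact hk
    have hsub : (Finset.univ : Finset (Fin n)) ⊆
        (Finset.range d).image (fun k => (σ^k) h) := by
      intro y _
      obtain ⟨k, hkd, hky⟩ := hall y
      exact Finset.mem_image.mpr ⟨k, Finset.mem_range.mpr hkd, hky⟩
    have hcard := Finset.card_le_card hsub
    have h4 : ((Finset.range d).image (fun k => (σ^k) h)).card ≤ d := by
      refine le_trans Finset.card_image_le ?_
      rw [Finset.card_range]
    rw [Finset.card_univ, Fintype.card_fin] at hcard
    omega
  intro i j heq
  by_contra hne
  have hvne : (i:ℕ) ≠ (j:ℕ) := fun hv => hne (Fin.val_injective hv)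
  rcases Nat.lt_or_ge (i:ℕ) (j:ℕ) with hlt | hge
  · exact key i j hlt j.isLt heq
  · exact key j i (by omega) i.isLt heq.symm

noncomputable def thetaFun {n : ℕ} (σ : Equiv.Perm (Fin n)) (hT : TransP σ) (h : Fin n) :
    Equiv.Perm (Fin n) :=
  Equiv.ofBijective (fun i : Fin n => (σ ^ (i : ℕ)) h)
    ((Finite.injective_iff_bijective).mp (gfun_injective hT h))

lemma thetaFun_apply {n : ℕ} (σ : Equiv.Perm (Fin n)) (hT : TransP σ) (h : Fin n)
    (i : Fin n) : thetaFun σ hT h i = (σ ^ (i : ℕ)) h := rfl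

noncomputable def sigmaOf {n : ℕ} (g : Equiv.Perm (Fin n)) : Equiv.Perm (Fin n) :=
  g * finRotate n * g⁻¹

lemma sigmaOf_apply {n : ℕ} (g : Equiv.Perm (Fin n)) (x : Fin n) :
    sigmaOf g x = g (finRotate n (g.symm x)) := by
  simp [sigmaOf, Equiv.Perm.mul_apply, Equiv.Perm.inv_def]

lemma sigmaOf_transP {n : ℕ} (g : Equiv.Perm (Fin n)) : TransP (sigmaOf g) :=
  transP_conj g (finRotate n) (transP_finRotate n)

lemma thetaFun_sigmaOf {n : ℕ} (hn : 1 ≤ n) (g : Equiv.Perm (Fin n)) :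
    thetaFun (sigmaOf g) (sigmaOf_transP g) (g ⟨0, by omega⟩) = g := by
  have key : ∀ (m : ℕ) (hm : m < n), ((sigmaOf g)^m) (g ⟨0, by omega⟩) = g ⟨m, hm⟩ := by
    intro m
    induction m with
    | zero => intro hm; rw [pow_zero]; rfl
    | succ m ih =>
      intro hm
      rw [pow_apply_succ, ih (by omega), sigmaOf_apply, Equiv.symm_apply_apply]
      congr 1
      apply Fin.val_injective
      exact finRotate_val_lt (by exact hm)
  apply Equiv.ext
  intro i
  rw [thetaFun_apply, key (i:ℕ) i.isLt]

lemma sigmaOf_thetaFun {n : ℕ} (hn : 1 ≤ n) (σ : Equiv.Perm (Fin n)) (hT : TransP σ)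
    (h : Fin n) : sigmaOf (thetaFun σ hT h) = σ := by
  apply Equiv.ext
  intro y
  rw [sigmaOf_apply]
  obtain ⟨i, rfl⟩ : ∃ i, thetaFun σ hT h i = y :=
    ⟨(thetaFun σ hT h).symm y, Equiv.apply_symm_apply _ y⟩
  rw [Equiv.symm_apply_apply]
  by_cases hlt : (i:ℕ) + 1 < n
  · rw [thetaFun_apply, thetaFun_apply, finRotate_val_lt hlt, pow_apply_succ]
  · have hival : (i:ℕ) + 1 = n := by have := i.isLt; omega
    have h1 : finRotate n i = ⟨0, by omega⟩ := by
      apply Fin.val_injective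
      match n, i, hival, hn with
      | (n+1), i, hival, _ =>
        rw [finRotate_val]
        simp only [hival]
        simp
    rw [h1]
    show (σ ^ ((0:ℕ))) h = σ (thetaFun σ hT h i)
    rw [thetaFun_apply, pow_zero, ← pow_apply_succ, hival, transP_pow_card hT]

lemma thetaFun_mem_GA {n : ℕ} (hn : 1 ≤ n) {M : Finset (Fin n)} {s : Fin n → Fin n}
    {σ : Equiv.Perm (Fin n)} (hσ : ∀ x ∈ M, σ x = s x) (hT : TransP σ)
    {h : Fin n} (hh : h ∈ ((M.image s)ᶜ : Finset (Fin n))) :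
    thetaFun σ hT h ∈ GA M s := by
  rw [mem_GA]
  intro x hx
  set i := (thetaFun σ hT h).symm x with hi
  have hgi : thetaFun σ hT h i = x := Equiv.apply_symm_apply _ x
  have hx' : (σ^((i:ℕ))) h = x := hgi
  have hlt : (i:ℕ) + 1 < n := by
    by_contra hge
    have hival : (i:ℕ) + 1 = n := by have := i.isLt; omega
    have h2 : σ x = h := by
      rw [← hx', ← pow_apply_succ, hival, transP_pow_card hT]
      rfl
    exact (Finset.mem_compl.mp hh)
      (Finset.mem_image.mpr ⟨x, hx, by rw [← hσ x hx, h2]⟩)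
  refine ⟨hlt, ?_⟩
  show thetaFun σ hT h (finRotate n i) = s x
  rw [thetaFun_apply, finRotate_val_lt hlt, pow_apply_succ, hx', hσ x hx]

lemma g0_mem {n : ℕ} (hn : 1 ≤ n) {M : Finset (Fin n)} {s : Fin n → Fin n}
    {g : Equiv.Perm (Fin n)} (hg : g ∈ GA M s) :
    g ⟨0, by omega⟩ ∈ ((M.image s)ᶜ : Finset (Fin n)) := by
  rw [Finset.mem_compl]
  intro hmem
  obtain ⟨y, hyM, hys⟩ := Finset.mem_image.mp hmem
  obtain ⟨h1, h2⟩ := mem_GA.mp hg y hyM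
  rw [hys] at h2
  have h3 : finRotate n (g.symm y) = ⟨0, by omega⟩ := g.injective h2
  have h4 : ((finRotate n (g.symm y) : Fin n):ℕ) = (g.symm y : ℕ) + 1 :=
    finRotate_val_lt h1
  rw [h3] at h4
  simp at h4

open Classical in
lemma card_GA {n : ℕ} (hn : 1 ≤ n) (M : Finset (Fin n)) (s : Fin n → Fin n)
    (hinj : Set.InjOn s ↑M) (hacyc : ∀ x ∈ M, ∃ k, s^[k] x ∉ M) :
    (GA M s).card = (n - M.card - 1).factorial * (n - M.card) := by
  have E : ({σ : Equiv.Perm (Fin n) // (∀ x ∈ M, σ x = s x) ∧ TransP σ} ×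
      {h : Fin n // h ∈ ((M.image s)ᶜ : Finset (Fin n))}) ≃ {g : Equiv.Perm (Fin n) // g ∈ GA M s} :=
    { toFun := fun p => ⟨thetaFun p.1.1 p.1.2.2 p.2.1,
        thetaFun_mem_GA hn p.1.2.1 p.1.2.2 p.2.2⟩
      invFun := fun g => (⟨sigmaOf g.1,
          fun x hx => by rw [sigmaOf_apply]; exact (mem_GA.mp g.2 x hx).2,
          sigmaOf_transP g.1⟩,
        ⟨g.1 ⟨0, by omega⟩, g0_mem hn g.2⟩)
      left_inv := fun p => by
        obtain ⟨⟨σ, hσ, hT⟩, ⟨h, hh⟩⟩ := p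
        have b1 := sigmaOf_thetaFun hn σ hT h
        have b2 : thetaFun σ hT h ⟨0, by omega⟩ = h := by
          rw [thetaFun_apply, pow_zero]; rfl
        refine Prod.ext (Subtype.ext ?_) (Subtype.ext ?_)
        · exact b1
        · exact b2
      right_inv := fun g => Subtype.ext (thetaFun_sigmaOf hn g.1) }
  have h1 : (GA M s).card = Nat.card {g : Equiv.Perm (Fin n) // g ∈ GA M s} :=
    (Nat.card_eq_finsetCard _).symm
  rw [h1, ← Nat.card_congr E, Nat.card_prod,
    Z1.countTrans n (Fin n) M s (Fintype.card_fin n) hinj hacyc]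
  congr 1
  rw [Nat.card_eq_fintype_card, Fintype.card_coe, Finset.card_compl,
    Finset.card_image_of_injOn hinj, Fintype.card_fin]

end Stmt10

namespace Stmt10
open Equiv Finset

open Classical in
lemma card_GB {n : ℕ} (M : Finset (Fin n)) (s : Fin n → Fin n) (hinj : Set.InjOn s ↑M) :
    (GB M s).card = (n - M.card).factorial := by
  classical
  have hfwd_mem : ∀ (τ : Equiv.Perm (Fin n)), (∀ x ∈ M, τ x = s x) →
      ∀ y : Fin n, y ∉ M → τ y ∈ ((M.image s)ᶜ : Finset (Fin n)) := by
    intro τ hτ y hy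
    rw [Finset.mem_compl]
    intro hmem
    obtain ⟨z, hzM, hzs⟩ := Finset.mem_image.mp hmem
    rw [← hτ z hzM] at hzs
    exact hy (by rwa [τ.injective hzs] at hzM)
  have hLH : Fintype.card {x : Fin n // x ∈ (Mᶜ : Finset (Fin n))}
      = Fintype.card {x : Fin n // x ∈ ((M.image s)ᶜ : Finset (Fin n))} := by
    rw [Fintype.card_coe, Fintype.card_coe, Finset.card_compl, Finset.card_compl,
      Finset.card_image_of_injOn hinj]
  have hbwd_inj : ∀ (β : {x : Fin n // x ∈ (Mᶜ : Finset (Fin n))} ≃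
      {x : Fin n // x ∈ ((M.image s)ᶜ : Finset (Fin n))}),
      Function.Injective (fun y : Fin n =>
        if hy : y ∈ M then s y else ((β ⟨y, Finset.mem_compl.mpr hy⟩ : {x : Fin n // x ∈ ((M.image s)ᶜ : Finset (Fin n))}) : Fin n)) := by
    intro β y₁ y₂ heq
    simp only at heq
    by_cases h1 : y₁ ∈ M <;> by_cases h2 : y₂ ∈ M
    · rw [dif_pos h1, dif_pos h2] at heq
      exact hinj h1 h2 heq
    · rw [dif_pos h1, dif_neg h2] at heq
      have hm : s y₁ ∈ M.image s := Finset.mem_image_of_mem s h1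
      rw [heq] at hm
      exact absurd hm (Finset.mem_compl.mp (β _).2)
    · rw [dif_neg h1, dif_pos h2] at heq
      have hm : s y₂ ∈ M.image s := Finset.mem_image_of_mem s h2
      rw [← heq] at hm
      exact absurd hm (Finset.mem_compl.mp (β _).2)
    · rw [dif_neg h1, dif_neg h2] at heq
      have h3 := β.injective (Subtype.ext heq)
      exact Subtype.ext_iff.mp h3
  have E : {τ : Equiv.Perm (Fin n) // ∀ x ∈ M, τ x = s x} ≃
      ({x : Fin n // x ∈ (Mᶜ : Finset (Fin n))} ≃
        {x : Fin n // x ∈ ((M.image s)ᶜ : Finset (Fin n))}) :=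
    { toFun := fun τ => Equiv.ofBijective
        (fun y => ⟨τ.1 (y : Fin n), hfwd_mem τ.1 τ.2 _ (Finset.mem_compl.mp y.2)⟩)
        (by
          rw [Fintype.bijective_iff_injective_and_card]
          exact ⟨fun a b hab => Subtype.ext (τ.1.injective (Subtype.ext_iff.mp hab)), hLH⟩)
      invFun := fun β => ⟨Equiv.ofBijective _
          ((Finite.injective_iff_bijective).mp (hbwd_inj β)),
        fun x hx => by
          show (if hy : x ∈ M then s x else _) = s x
          rw [dif_pos hx]⟩
      left_inv := fun τ => Subtype.ext (Equiv.ext fun y => by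
        show (if hy : y ∈ M then s y else _) = τ.1 y
        by_cases hy : y ∈ M
        · rw [dif_pos hy, τ.2 y hy]
        · rw [dif_neg hy]
          rfl)
      right_inv := fun β => Equiv.ext fun y => Subtype.ext (by
        show (if hy : (y : Fin n) ∈ M then s (y : Fin n) else _) = ((β y : _) : Fin n)
        rw [dif_neg (Finset.mem_compl.mp y.2)]) }
  have h1 : (GB M s).card = Nat.card {τ : Equiv.Perm (Fin n) // τ ∈ GB M s} :=
    (Nat.card_eq_finsetCard _).symm
  have E0 : {τ : Equiv.Perm (Fin n) // τ ∈ GB M s} ≃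
      {τ : Equiv.Perm (Fin n) // ∀ x ∈ M, τ x = s x} :=
    Equiv.subtypeEquivRight (fun τ => mem_GB)
  rw [h1, Nat.card_congr (E0.trans E), Nat.card_eq_fintype_card,
    Fintype.card_equiv (Fintype.equivOfCardEq hLH), Fintype.card_coe,
    Finset.card_compl, Fintype.card_fin]

end Stmt10

namespace Stmt10
open Equiv Finset

open Classical in
noncomputable def des {n : ℕ} (X : Set (ℕ × ℕ)) (g : Equiv.Perm (Fin n)) : Finset (Fin n) :=
  Finset.univ.filter (fun i : Fin n => (i:ℕ)+1 < n ∧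
    (((g i : Fin n):ℕ)+1, ((g (finRotate n i) : Fin n):ℕ)+1) ∈ X)

lemma mem_des {n : ℕ} {X : Set (ℕ × ℕ)} {g : Equiv.Perm (Fin n)} {i : Fin n} :
    i ∈ des X g ↔ ((i:ℕ)+1 < n ∧
      (((g i : Fin n):ℕ)+1, ((g (finRotate n i) : Fin n):ℕ)+1) ∈ X) := by
  simp [des]

def ValidPS {n : ℕ} (X : Set (ℕ × ℕ)) (M : Finset (Fin n)) (s : Fin n → Fin n) : Prop :=
  Set.InjOn s ↑M ∧ (∀ x ∈ M, ∃ k, s^[k] x ∉ M) ∧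
    (∀ x ∈ M, (((x:ℕ)+1, ((s x : Fin n):ℕ)+1) ∈ X)) ∧ (∀ x, x ∉ M → s x = x)

open Classical in
noncomputable def CC (n : ℕ) (X : Set (ℕ × ℕ)) : Finset (Finset (Fin n) × (Fin n → Fin n)) :=
  Finset.univ.filter (fun p => ValidPS X p.1 p.2)

lemma mem_CC {n : ℕ} {X : Set (ℕ × ℕ)} {p : Finset (Fin n) × (Fin n → Fin n)} :
    p ∈ CC n X ↔ ValidPS X p.1 p.2 := by
  simp [CC]

lemma validPS_apply_ne {n : ℕ} {X : Set (ℕ × ℕ)} {M : Finset (Fin n)} {s : Fin n → Fin n}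
    (h : ValidPS X M s) {x : Fin n} (hx : x ∈ M) : s x ≠ x := by
  intro hfix
  obtain ⟨k, hk⟩ := h.2.1 x hx
  exact hk (by rw [Function.iterate_fixed hfix]; exact hx)

lemma validPS_card_lt {n : ℕ} (hn : 1 ≤ n) {X : Set (ℕ × ℕ)} {M : Finset (Fin n)}
    {s : Fin n → Fin n} (h : ValidPS X M s) : M.card < n := by
  rcases Nat.lt_or_ge M.card n with hc | hc
  · exact hc
  · exfalso
    have hle : M.card ≤ Fintype.card (Fin n) := Finset.card_le_univ M
    rw [Fintype.card_fin] at hle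
    have hcard : M.card = Fintype.card (Fin n) := by rw [Fintype.card_fin]; omega
    have huniv : M = Finset.univ := (Finset.card_eq_iff_eq_univ M).mp hcard
    have hall : ∀ y : Fin n, y ∈ M := Finset.eq_univ_iff_forall.mp huniv
    obtain ⟨k, hk⟩ := h.2.1 ⟨0, by omega⟩ (hall _)
    exact hk (hall _)

open Classical in
noncomputable def keyA {n : ℕ} (p : (_ : Equiv.Perm (Fin n)) × Finset (Fin n)) :
    Finset (Fin n) × (Fin n → Fin n) :=
  (p.2.image p.1, fun x => if x ∈ p.2.image p.1 then p.1 (finRotate n (p.1.symm x)) else x)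

open Classical in
lemma keyA_maps_to {n : ℕ} {X : Set (ℕ × ℕ)} {g : Equiv.Perm (Fin n)} {T : Finset (Fin n)}
    (hT : T ⊆ des X g) : keyA (⟨g, T⟩ : (_ : Equiv.Perm (Fin n)) × Finset (Fin n)) ∈ CC n X := by
  rw [mem_CC]
  show ValidPS X (T.image g)
    (fun x => if x ∈ T.image g then g (finRotate n (g.symm x)) else x)
  set M := T.image g with hM
  set s : Fin n → Fin n :=
    fun x => if x ∈ T.image g then g (finRotate n (g.symm x)) else x with hs
  have hsx : ∀ x ∈ M, s x = g (finRotate n (g.symm x)) := by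
    intro x hx
    rw [hs]
    simp only [if_pos (show x ∈ T.image g from hx)]
  have hmemT : ∀ x ∈ M, g.symm x ∈ T := by
    intro x hx
    obtain ⟨i, hiT, hgi⟩ := Finset.mem_image.mp hx
    rwa [← hgi, Equiv.symm_apply_apply]
  refine ⟨?_, ?_, ?_, ?_⟩
  · intro x₁ h₁ x₂ h₂ heq
    rw [Finset.mem_coe] at h₁ h₂
    rw [hsx x₁ h₁, hsx x₂ h₂] at heq
    have h3 := (finRotate n).injective (g.injective heq)
    have h4 := congrArg g h3
    rwa [Equiv.apply_symm_apply, Equiv.apply_symm_apply] at h4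
  · have main : ∀ m : ℕ, ∀ x ∈ M, n - ((g.symm x : Fin n):ℕ) ≤ m → ∃ k, s^[k] x ∉ M := by
      intro m
      induction m with
      | zero =>
        intro x hx h0
        exact absurd h0 (by have := (g.symm x).isLt; omega)
      | succ m ih =>
        intro x hx hm
        by_cases hsM : s x ∈ M
        · have hiT : g.symm x ∈ T := hmemT x hx
          have hlt : ((g.symm x : Fin n):ℕ) + 1 < n := (mem_des.mp (hT hiT)).1
          have hval : ((g.symm (s x) : Fin n):ℕ) = ((g.symm x : Fin n):ℕ) + 1 := by
            rw [hsx x hx, Equiv.symm_apply_apply]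
            exact finRotate_val_lt hlt
          obtain ⟨k, hk⟩ := ih (s x) hsM (by omega)
          exact ⟨k+1, by rw [Function.iterate_succ_apply]; exact hk⟩
        · exact ⟨1, by rw [Function.iterate_one]; exact hsM⟩
    intro x hx
    exact main n x hx (by omega)
  · intro x hx
    obtain ⟨i, hiT, hgi⟩ := Finset.mem_image.mp hx
    have harc := (mem_des.mp (hT hiT)).2
    rw [hsx x hx, ← hgi, Equiv.symm_apply_apply]
    exact harc
  · intro x hx
    rw [hs]
    simp only [if_neg (show ¬ x ∈ T.image g from hx)]

open Classical in
lemma regroupA {n : ℕ} (hn : 1 ≤ n) (X : Set (ℕ × ℕ)) :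
    ∑ p ∈ (Finset.univ : Finset (Equiv.Perm (Fin n))).sigma (fun g => (des X g).powerset),
        (-1:ℤ)^(p.2.card)
      = ∑ c ∈ CC n X, (-1:ℤ)^(c.1.card) * ((GA c.1 c.2).card : ℤ) := by
  rw [← Finset.sum_fiberwise_of_maps_to (g := keyA) (t := CC n X) (fun p hp => by
    obtain ⟨g, T⟩ := p
    rw [Finset.mem_sigma] at hp
    exact keyA_maps_to (Finset.mem_powerset.mp hp.2))]
  apply Finset.sum_congr rfl
  intro c hc
  obtain ⟨M, s⟩ := c
  rw [mem_CC] at hc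
  have hfib : ∀ p ∈ ((Finset.univ : Finset (Equiv.Perm (Fin n))).sigma
      (fun g => (des X g).powerset)).filter (fun p => keyA p = (M, s)),
      (-1:ℤ)^(p.2.card) = (-1:ℤ)^(M.card) := by
    intro p hp
    rw [Finset.mem_filter] at hp
    have h1 : p.2.image p.1 = M := congrArg Prod.fst hp.2
    have h2 : p.2.card = M.card := by
      rw [← h1, Finset.card_image_of_injective _ p.1.injective]
    rw [h2]
  rw [Finset.sum_congr rfl hfib]
  rw [Finset.sum_const, nsmul_eq_mul, mul_comm]
  congr 1
  · -- cardinality of the fiber equals (GA M s).card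
    congr 1
    apply Finset.card_nbij' (fun p => p.1)
      (fun g => ⟨g, Finset.univ.filter (fun i => g i ∈ M)⟩)
    · -- forward maps into GA
      intro p hp
      rw [Finset.mem_coe, Finset.mem_filter, Finset.mem_sigma] at hp
      obtain ⟨⟨-, hT⟩, hkey⟩ := hp
      rw [Finset.mem_powerset] at hT
      have h1 : p.2.image p.1 = M := congrArg Prod.fst hkey
      have h2 : (fun x => if x ∈ p.2.image p.1 then p.1 (finRotate n (p.1.symm x)) else x) = s :=
        congrArg Prod.snd hkey
      rw [Finset.mem_coe, mem_GA]
      intro x hx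
      have hxi : x ∈ p.2.image p.1 := by rw [h1]; exact hx
      obtain ⟨i, hiT, hgi⟩ := Finset.mem_image.mp hxi
      have hlt : ((p.1.symm x : Fin n):ℕ) + 1 < n := by
        rw [← hgi, Equiv.symm_apply_apply]
        exact (mem_des.mp (hT hiT)).1
      refine ⟨hlt, ?_⟩
      have h3 := congrFun h2 x
      simp only [if_pos hxi] at h3
      exact h3
    · -- backward maps into the fiber
      intro g hg
      rw [Finset.mem_coe, Finset.mem_filter, Finset.mem_sigma]
      set T := Finset.univ.filter (fun i => g i ∈ M) with hTdef
      have hTmem : ∀ i : Fin n, i ∈ T ↔ g i ∈ M := by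
        intro i; rw [hTdef, Finset.mem_filter]; simp
      have hTsub : T ⊆ des X g := by
        intro i hiT
        rw [hTmem] at hiT
        obtain ⟨hlt, heq⟩ := mem_GA.mp hg (g i) hiT
        rw [Equiv.symm_apply_apply] at hlt heq
        rw [mem_des]
        refine ⟨hlt, ?_⟩
        rw [heq]
        exact hc.2.2.1 (g i) hiT
      have hTimg : T.image g = M := by
        ext y
        rw [Finset.mem_image]
        constructor
        · rintro ⟨i, hiT, rfl⟩
          exact (hTmem i).mp hiT
        · intro hy
          exact ⟨g.symm y, (hTmem _).mpr (by rwa [Equiv.apply_symm_apply]), Equiv.apply_symm_apply g y⟩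
      refine ⟨⟨Finset.mem_univ _, Finset.mem_powerset.mpr hTsub⟩, ?_⟩
      show keyA ⟨g, T⟩ = (M, s)
      rw [keyA]
      refine Prod.ext hTimg ?_
      show (fun x => if x ∈ T.image g then g (finRotate n (g.symm x)) else x) = s
      funext x
      rw [hTimg]
      by_cases hx : x ∈ M
      · rw [if_pos hx]
        exact (mem_GA.mp hg x hx).2
      · rw [if_neg hx]
        exact (hc.2.2.2 x hx).symm
    · -- left inverse
      intro p hp
      rw [Finset.mem_coe, Finset.mem_filter, Finset.mem_sigma] at hp
      obtain ⟨g, T⟩ := p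
      obtain ⟨⟨-, -⟩, hkey⟩ := hp
      have h1 : T.image g = M := congrArg Prod.fst hkey
      have hTeq : Finset.univ.filter (fun i => g i ∈ M) = T := by
        ext i
        rw [Finset.mem_filter]
        constructor
        · rintro ⟨-, hi⟩
          rw [← h1, Finset.mem_image] at hi
          obtain ⟨j, hjT, hji⟩ := hi
          rwa [← g.injective hji]
        · intro hi
          exact ⟨Finset.mem_univ _, by rw [← h1]; exact Finset.mem_image_of_mem g hi⟩
      show (⟨g, Finset.univ.filter (fun i => g i ∈ M)⟩ :
        (_ : Equiv.Perm (Fin n)) × Finset (Fin n)) = ⟨g, T⟩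
      rw [hTeq]
    · -- right inverse
      intro g hg
      rfl

end Stmt10

namespace Stmt10
open Equiv Finset

open Classical in
noncomputable def keyB {n : ℕ} (p : (_ : Equiv.Perm (Fin n)) × Finset (Fin n)) :
    Finset (Fin n) × (Fin n → Fin n) :=
  (p.2, fun x => if x ∈ p.2 then p.1 x else x)

open Classical in
lemma keyB_maps_to {n : ℕ} {X : Set (ℕ × ℕ)} {τ : Equiv.Perm (Fin n)} {M : Finset (Fin n)}
    (hM : M ∈ validM X τ) :
    keyB (⟨τ, M⟩ : (_ : Equiv.Perm (Fin n)) × Finset (Fin n)) ∈ CC n X := by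
  rw [mem_CC]
  obtain ⟨hi, hii⟩ := (mem_validM X τ M).mp hM
  show ValidPS X M (fun x => if x ∈ M then τ x else x)
  set s : Fin n → Fin n := fun x => if x ∈ M then τ x else x with hs
  have hsx : ∀ x ∈ M, s x = τ x := by
    intro x hx
    rw [hs]
    simp only [if_pos hx]
  refine ⟨?_, ?_, ?_, ?_⟩
  · intro x₁ h₁ x₂ h₂ heq
    rw [Finset.mem_coe] at h₁ h₂
    rw [hsx x₁ h₁, hsx x₂ h₂] at heq
    exact τ.injective heq
  · have main : ∀ (k : ℕ) (x : Fin n), (τ^k) x ∉ M → ∃ k', s^[k'] x ∉ M := by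
      intro k
      induction k with
      | zero =>
        intro x hx
        rw [pow_zero] at hx
        exact ⟨0, by simpa using hx⟩
      | succ k ih =>
        intro x hx
        by_cases hxM : x ∈ M
        · have h1 : (τ^(k+1)) x = (τ^k) (τ x) := by
            rw [pow_succ, Equiv.Perm.mul_apply]
          rw [h1] at hx
          obtain ⟨k', hk'⟩ := ih (τ x) hx
          refine ⟨k'+1, ?_⟩
          rw [Function.iterate_succ_apply, hsx x hxM]
          exact hk'
        · exact ⟨0, by simpa using hxM⟩
    intro x hx
    obtain ⟨k, hk⟩ := hii x
    exact main k x hk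
  · intro x hx
    rw [hsx x hx]
    exact (hi x hx).2
  · intro x hx
    rw [hs]
    simp only [if_neg hx]

open Classical in
lemma regroupB {n : ℕ} (hn : 1 ≤ n) (X : Set (ℕ × ℕ)) :
    ∑ p ∈ (Finset.univ : Finset (Equiv.Perm (Fin n))).sigma (fun τ => validM X τ),
        (-1:ℤ)^(p.2.card)
      = ∑ c ∈ CC n X, (-1:ℤ)^(c.1.card) * ((GB c.1 c.2).card : ℤ) := by
  rw [← Finset.sum_fiberwise_of_maps_to (g := keyB) (t := CC n X) (fun p hp => by
    obtain ⟨τ, M⟩ := p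
    rw [Finset.mem_sigma] at hp
    exact keyB_maps_to hp.2)]
  apply Finset.sum_congr rfl
  intro c hc
  obtain ⟨M, s⟩ := c
  rw [mem_CC] at hc
  have hfib : ∀ p ∈ ((Finset.univ : Finset (Equiv.Perm (Fin n))).sigma
      (fun τ => validM X τ)).filter (fun p => keyB p = (M, s)),
      (-1:ℤ)^(p.2.card) = (-1:ℤ)^(M.card) := by
    intro p hp
    rw [Finset.mem_filter] at hp
    have h1 : p.2 = M := congrArg Prod.fst hp.2
    rw [h1]
  rw [Finset.sum_congr rfl hfib, Finset.sum_const, nsmul_eq_mul, mul_comm]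
  congr 2
  apply Finset.card_nbij' (fun p => p.1) (fun τ => ⟨τ, M⟩)
  · -- forward into GB
    intro p hp
    rw [Finset.mem_coe, Finset.mem_filter] at hp
    have h1 : p.2 = M := congrArg Prod.fst hp.2
    have h2 : (fun x => if x ∈ p.2 then p.1 x else x) = s := congrArg Prod.snd hp.2
    rw [Finset.mem_coe, mem_GB]
    intro x hx
    have h3 := congrFun h2 x
    rw [h1] at h3
    show p.1 x = s x
    rw [← h3, if_pos hx]
  · -- backward into the fiber
    intro τ hτ
    rw [Finset.mem_coe, mem_GB] at hτ
    rw [Finset.mem_coe, Finset.mem_filter, Finset.mem_sigma]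
    have hMv : M ∈ validM X τ := by
      rw [mem_validM]
      constructor
      · intro x hx
        rw [hτ x hx]
        exact ⟨validPS_apply_ne hc hx, hc.2.2.1 x hx⟩
      · have main : ∀ (k : ℕ) (x : Fin n), x ∈ M → s^[k] x ∉ M → ∃ k', (τ^k') x ∉ M := by
          intro k
          induction k with
          | zero =>
            intro x hx h0
            exact absurd hx h0
          | succ k ih =>
            intro x hx hk
            rw [Function.iterate_succ_apply] at hk
            by_cases hsM : s x ∈ M
            · obtain ⟨k', hk'⟩ := ih (s x) hsM hk
              refine ⟨k'+1, ?_⟩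
              have h1 : (τ^(k'+1)) x = (τ^k') (τ x) := by
                rw [pow_succ, Equiv.Perm.mul_apply]
              rw [h1, hτ x hx]
              exact hk'
            · refine ⟨1, ?_⟩
              rw [pow_one, hτ x hx]
              exact hsM
        intro x
        by_cases hx : x ∈ M
        · obtain ⟨k, hk⟩ := hc.2.1 x hx
          exact main k x hx hk
        · exact ⟨0, by simpa using hx⟩
    refine ⟨⟨Finset.mem_univ _, hMv⟩, ?_⟩
    show keyB ⟨τ, M⟩ = (M, s)
    rw [keyB]
    refine Prod.ext rfl ?_
    funext x
    show (if x ∈ M then τ x else x) = s x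
    by_cases hx : x ∈ M
    · rw [if_pos hx]
      exact hτ x hx
    · rw [if_neg hx]
      exact (hc.2.2.2 x hx).symm
  · -- left inverse
    intro p hp
    rw [Finset.mem_coe, Finset.mem_filter] at hp
    obtain ⟨τ, M'⟩ := p
    have h1 : M' = M := congrArg Prod.fst hp.2
    show (⟨τ, M⟩ : (_ : Equiv.Perm (Fin n)) × Finset (Fin n)) = ⟨τ, M'⟩
    rw [h1]
  · intro τ hτ
    rfl

end Stmt10

namespace Stmt10
open Equiv Finset

lemma list_getD_lemma {n : ℕ} (f : Fin n → ℕ) {m : ℕ} (hm : m < n) :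
    (List.ofFn f).getD m 0 = f ⟨m, hm⟩ := by
  have hlen : m < (List.ofFn f).length := by rw [List.length_ofFn]; exact hm
  rw [List.getD_eq_getElem _ _ hlen, List.getElem_ofFn]

open Classical in
lemma desFree_equiv {n : ℕ} (hn : 1 ≤ n) (X : Set (ℕ × ℕ)) :
    Nat.card {w : List ℕ // w.Nodup ∧ w.toFinset = Finset.Icc 1 n ∧ XDes X w = ∅}
      = ((Finset.univ : Finset (Equiv.Perm (Fin n))).filter (fun g => des X g = ∅)).card := by
  classical
  -- data of the forward map (from permutations to words)
  have hofn : ∀ g : Equiv.Perm (Fin n), (List.ofFn (fun i => ((g i : Fin n):ℕ) + 1)).length = n :=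
    fun g => List.length_ofFn
  have hnodup : ∀ g : Equiv.Perm (Fin n), (List.ofFn (fun i => ((g i : Fin n):ℕ) + 1)).Nodup := by
    intro g
    rw [List.nodup_ofFn]
    intro i j hij
    simp only at hij
    exact g.injective (Fin.val_injective (by omega))
  have htofin : ∀ g : Equiv.Perm (Fin n),
      (List.ofFn (fun i => ((g i : Fin n):ℕ) + 1)).toFinset = Finset.Icc 1 n := by
    intro g
    ext a
    rw [List.mem_toFinset, Finset.mem_Icc]
    constructor
    · intro ha
      obtain ⟨i, hi⟩ := List.mem_ofFn.mp ha
      have := (g i).isLt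
      omega
    · intro ⟨h1, h2⟩
      refine List.mem_ofFn.mpr ⟨g.symm ⟨a - 1, by omega⟩, ?_⟩
      show ((g (g.symm ⟨a - 1, by omega⟩) : Fin n) : ℕ) + 1 = a
      rw [Equiv.apply_symm_apply]
      show (a - 1) + 1 = a
      omega
  have hgetD : ∀ (g : Equiv.Perm (Fin n)) (m : ℕ) (hm : m < n),
      (List.ofFn (fun i => ((g i : Fin n):ℕ) + 1)).getD m 0 = ((g ⟨m, hm⟩ : Fin n):ℕ) + 1 :=
    fun g m hm => list_getD_lemma _ hm
  -- the XDes/des correspondence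
  have hdes : ∀ g : Equiv.Perm (Fin n),
      (XDes X (List.ofFn (fun i => ((g i : Fin n):ℕ) + 1)) = ∅ ↔ des X g = ∅) := by
    intro g
    unfold XDes des
    rw [Finset.filter_eq_empty_iff, Finset.filter_eq_empty_iff, hofn g]
    constructor
    · intro h i _
      intro hcon
      obtain ⟨hlt, harc⟩ := hcon
      have hm : (i:ℕ)+1 ∈ Finset.Icc 1 (n - 1) := by
        rw [Finset.mem_Icc]
        omega
      apply h hm
      have h1 : ((i:ℕ)+1) - 1 = (i:ℕ) := by omega
      rw [h1, hgetD g (i:ℕ) i.isLt, hgetD g ((i:ℕ)+1) hlt]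
      have h2 : (⟨(i:ℕ), i.isLt⟩ : Fin n) = i := rfl
      rw [h2]
      have h3 : (⟨(i:ℕ)+1, hlt⟩ : Fin n) = finRotate n i :=
        Fin.val_injective (by rw [finRotate_val_lt hlt])
      rw [h3]
      exact harc
    · intro h m hm harc
      rw [Finset.mem_Icc] at hm
      have hm1 : m - 1 < n := by omega
      have hmn : m < n := by omega
      rw [hgetD g (m-1) hm1, hgetD g m hmn] at harc
      have h4 := h (Finset.mem_univ (⟨m-1, hm1⟩ : Fin n))
      apply h4
      refine ⟨by show (m-1)+1 < n; omega, ?_⟩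
      have h3 : finRotate n ⟨m-1, hm1⟩ = ⟨m, hmn⟩ := by
        apply Fin.val_injective
        rw [finRotate_val_lt (show (m-1)+1 < n by omega)]
        show (m - 1) + 1 = m
        omega
      rw [h3]
      exact harc
  -- backward map data
  have hback : ∀ w : List ℕ, w.Nodup → w.toFinset = Finset.Icc 1 n → w.length = n := by
    intro w hnd htf
    have h1 := List.toFinset_card_of_nodup hnd
    rw [htf, Nat.card_Icc] at h1
    omega
  have hbounds : ∀ (w : List ℕ), w.Nodup → w.toFinset = Finset.Icc 1 n →
      ∀ m, m < n → 1 ≤ w.getD m 0 ∧ w.getD m 0 ≤ n := by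
    intro w hnd htf m hm
    have hlen := hback w hnd htf
    have hlt : m < w.length := by omega
    rw [List.getD_eq_getElem _ _ hlt]
    have : w[m] ∈ w.toFinset := List.mem_toFinset.mpr (List.getElem_mem hlt)
    rw [htf, Finset.mem_Icc] at this
    exact this
  -- now build the equiv
  have hofn_inj : ∀ g₁ g₂ : Equiv.Perm (Fin n),
      List.ofFn (fun i => ((g₁ i : Fin n):ℕ) + 1) = List.ofFn (fun i => ((g₂ i : Fin n):ℕ) + 1)
      → g₁ = g₂ := by
    intro g₁ g₂ h
    have h2 := List.ofFn_inj.mp h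
    apply Equiv.ext
    intro i
    have h3 := congrFun h2 i
    exact Fin.val_injective (by omega)
  have hsurj : ∀ w : {w : List ℕ // w.Nodup ∧ w.toFinset = Finset.Icc 1 n ∧ XDes X w = ∅},
      ∃ g : {g : Equiv.Perm (Fin n) // des X g = ∅},
        (List.ofFn (fun i => ((g.1 i : Fin n):ℕ) + 1)) = w.1 := by
    intro w
    obtain ⟨w, hnd, htf, hxd⟩ := w
    have hlen := hback w hnd htf
    have hbd := hbounds w hnd htf
    have hinj : Function.Injective (fun i : Fin n => (⟨w.getD (i:ℕ) 0 - 1, by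
        have := hbd (i:ℕ) i.isLt; omega⟩ : Fin n)) := by
      intro i j hij
      have hi := hbd (i:ℕ) i.isLt
      have hj := hbd (j:ℕ) j.isLt
      have hv : w.getD (i:ℕ) 0 = w.getD (j:ℕ) 0 := by
        simp only at hij
        rw [Fin.mk.injEq] at hij
        omega
      have hlt1 : (i:ℕ) < w.length := by rw [hlen]; exact i.isLt
      have hlt2 : (j:ℕ) < w.length := by rw [hlen]; exact j.isLt
      rw [List.getD_eq_getElem _ _ hlt1, List.getD_eq_getElem _ _ hlt2] at hv
      exact Fin.val_injective ((List.Nodup.getElem_inj_iff hnd).mp hv)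
    set g : Equiv.Perm (Fin n) :=
      Equiv.ofBijective _ ((Finite.injective_iff_bijective).mp hinj) with hg
    have happ : ∀ i : Fin n, ((g i : Fin n):ℕ) = w.getD ((i:ℕ)) 0 - 1 := fun i => rfl
    have hlist : List.ofFn (fun i => ((g i : Fin n):ℕ) + 1) = w := by
      apply List.ext_getElem
      · rw [List.length_ofFn, hlen]
      · intro m h1 h2
        rw [List.getElem_ofFn]
        have hmn : m < n := by rw [List.length_ofFn] at h1; exact h1
        have hb := hbd m hmn
        rw [List.getD_eq_getElem _ _ h2] at hb
        show ((g _ : Fin n):ℕ) + 1 = w[m]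
        rw [happ]
        show w.getD ((((⟨m, hmn⟩ : Fin n)):ℕ)) 0 - 1 + 1 = w[m]
        rw [List.getD_eq_getElem _ _ h2]
        omega
    have hdesg : des X g = ∅ := (hdes g).mp (by rw [hlist]; exact hxd)
    exact ⟨⟨g, hdesg⟩, hlist⟩
  have E : {g : Equiv.Perm (Fin n) // des X g = ∅} ≃
      {w : List ℕ // w.Nodup ∧ w.toFinset = Finset.Icc 1 n ∧ XDes X w = ∅} :=
    Equiv.ofBijective (fun g => ⟨List.ofFn (fun i => ((g.1 i : Fin n):ℕ) + 1),
        hnodup g.1, htofin g.1, (hdes g.1).mpr g.2⟩)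
      ⟨fun g₁ g₂ h12 => Subtype.ext (hofn_inj _ _ (by
          have h13 := Subtype.ext_iff.mp h12
          simpa using h13)),
       fun w => by
        obtain ⟨g, hg⟩ := hsurj w
        exact ⟨g, Subtype.ext hg⟩⟩
  rw [← Nat.card_congr E, Nat.card_eq_fintype_card, Fintype.card_subtype]

end Stmt10

namespace Stmt10
open Equiv Finset

open Classical in
lemma inclusionExclusion {n : ℕ} (X : Set (ℕ × ℕ)) :
    ((((Finset.univ : Finset (Equiv.Perm (Fin n)))).filter (fun g => des X g = ∅)).card : ℤ)
      = ∑ p ∈ (Finset.univ : Finset (Equiv.Perm (Fin n))).sigma (fun g => (des X g).powerset),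
          (-1:ℤ)^(p.2.card) := by
  rw [Finset.sum_sigma]
  rw [Finset.sum_congr rfl (fun g _ => Finset.sum_powerset_neg_one_pow_card)]
  exact (Finset.sum_boole _ _).symm

open Classical in
lemma sumBB {n : ℕ} (X : Set (ℕ × ℕ)) :
    ∑ p ∈ (Finset.univ : Finset (Equiv.Perm (Fin n))).sigma (fun τ => validM X τ),
        (-1:ℤ)^(p.2.card)
      = ∑ σ ∈ Finset.univ.filter (fun σ : Equiv.Perm (Fin n) =>
          ∀ c ∈ σ.cycleFactorsFinset, isGcycle X c ∨ isGbarCycle X c),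
        (-1 : ℤ) ^ (∑ c ∈ σ.cycleFactorsFinset.filter (fun c => isGbarCycle X c),
          (c.support.card - 1)) := by
  rw [Finset.sum_sigma]
  rw [Finset.sum_congr rfl (fun τ _ => sum_validM X τ)]
  exact (Finset.sum_filter _ _).symm

end Stmt10

open Classical in
theorem stmt10' (X : Set (ℕ × ℕ)) (n : ℕ) (hn : 1 ≤ n) :
    (dXn X ∅ n : ℤ) =
      ∑ σ ∈ Finset.univ.filter (fun σ : Equiv.Perm (Fin n) =>
          ∀ c ∈ σ.cycleFactorsFinset, isGcycle X c ∨ isGbarCycle X c),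
        (-1 : ℤ) ^ (∑ c ∈ σ.cycleFactorsFinset.filter (fun c => isGbarCycle X c),
          (c.support.card - 1)) := by
  classical
  have h0 : dXn X ∅ n = ((Finset.univ : Finset (Equiv.Perm (Fin n))).filter
      (fun g => Stmt10.des X g = ∅)).card := by
    show Nat.card {w : List ℕ // w.Nodup ∧ w.toFinset = Finset.Icc 1 n ∧ XDes X w = ∅} = _
    exact Stmt10.desFree_equiv hn X
  rw [h0, Stmt10.inclusionExclusion X, Stmt10.regroupA hn X]
  rw [← Stmt10.sumBB X, Stmt10.regroupB hn X]
  apply Finset.sum_congr rfl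
  intro c hc
  obtain ⟨M, s⟩ := c
  rw [Stmt10.mem_CC] at hc
  congr 1
  have hlt : M.card < n := Stmt10.validPS_card_lt hn hc
  rw [Stmt10.card_GA hn M s hc.1 hc.2.1, Stmt10.card_GB M s hc.1]
  congr 1
  have hpos : 0 < n - M.card := by omega
  rw [mul_comm]
  exact Nat.mul_factorial_pred hpos.ne'

open Classical in
/-- Grinberg–Stanley, general digraphs. With `D = G_n(X)` and its
complement `D̄`:
`d_X(∅;n) = Σ_{σ ∈ 𝔖_{[n]}(D,D̄)} (−1)^{φ(σ)}`, where `𝔖_{[n]}(D,D̄)` consists of the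
permutations of `[n]` each of whose nontrivial cycles is a `D`-cycle or a `D̄`-cycle, and
`φ(σ) = Σ (|γ| − 1)` over the nontrivial cycles `γ` of `σ` that are `D̄`-cycles. -/
theorem stmt10 (X : Set (ℕ × ℕ)) (n : ℕ) (hn : 1 ≤ n) :
    (dXn X ∅ n : ℤ) =
      ∑ σ ∈ Finset.univ.filter (fun σ : Equiv.Perm (Fin n) =>
          ∀ c ∈ σ.cycleFactorsFinset, isGcycle X c ∨ isGbarCycle X c),
        (-1 : ℤ) ^ (∑ c ∈ σ.cycleFactorsFinset.filter (fun c => isGbarCycle X c),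
          (c.support.card - 1)) := stmt10' X n hn
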